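/- For every real t > 0, the function 1/t - 1/(1 - e^{-t}) satisfies -1 ≤ 1/t - 1/(1 - e^{-t}) ≤ -1/2. -/

import Mathlib

lemma aux_key2 (s : ℝ) (hs : 0 ≤ s) : 2 - s ≤ (2 + s) * Real.exp (-s) := by
  have hd : ∀ x : ℝ, HasDerivAt (fun x : ℝ => (2 + x) * Real.exp (-x) + x)
      (1 - (1 + x) * Real.exp (-x)) x := by
    intro x
    have h1 : HasDerivAt (fun x : ℝ => Real.exp (-x)) (-Real.exp (-x)) x := by
      simpa using ((hasDerivAt_id x).neg).exp
    have h2 : HasDerivAt (fun x : ℝ => (2 + x)) 1 x := by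
      simpa using (hasDerivAt_id x).const_add 2
    have h3 : HasDerivAt (fun x : ℝ => (2 + x) * Real.exp (-x) + x) _ x := (h2.mul h1).add (hasDerivAt_id' x)
    convert h3 using 1
    ring
  have mono : MonotoneOn (fun x : ℝ => (2 + x) * Real.exp (-x) + x) (Set.Ici 0) := by
    apply monotoneOn_of_deriv_nonneg (convex_Ici 0)
    · exact Continuous.continuousOn (by continuity)
    · intro x _
      exact (hd x).differentiableAt.differentiableWithinAt
    · intro x hx
      rw [(hd x).deriv]
      have hx0 : (0:ℝ) ≤ x := le_of_lt (by simpa using hx)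
      have h1 : (1 + x) * Real.exp (-x) ≤ 1 := by
        have := Real.add_one_le_exp x
        have hE : 0 < Real.exp (-x) := Real.exp_pos _
        have : (1 + x) * Real.exp (-x) ≤ Real.exp x * Real.exp (-x) := by
          apply mul_le_mul_of_nonneg_right _ hE.le
          linarith
        rwa [← Real.exp_add, add_neg_cancel, Real.exp_zero] at this
      linarith
  have h0 : (fun x : ℝ => (2 + x) * Real.exp (-x) + x) 0 ≤
      (fun x : ℝ => (2 + x) * Real.exp (-x) + x) s :=
    mono (Set.self_mem_Ici) hs hs
  simp only [neg_zero, Real.exp_zero, mul_one, add_zero] at h0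
  linarith

theorem bounds_on_exp_term (t : ℝ) (ht : 0 < t) :
    -1 ≤ 1 / t - 1 / (1 - Real.exp (-t)) ∧ 1 / t - 1 / (1 - Real.exp (-t)) ≤ -(1 / 2) := by
  set E := Real.exp (-t) with hE
  have hEpos : 0 < E := Real.exp_pos _
  have hE1 : E < 1 := by
    rw [hE, ← Real.exp_zero]
    exact Real.exp_lt_exp.mpr (by linarith)
  have hden : 0 < 1 - E := by linarith
  have key1 : (1 + t) * E ≤ 1 := by
    have h := Real.add_one_le_exp t
    have : (1 + t) * E ≤ Real.exp t * E :=
      mul_le_mul_of_nonneg_right (by linarith) hEpos.le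
    rwa [hE, ← Real.exp_add, add_neg_cancel, Real.exp_zero] at this
  have key2 : 2 - t ≤ (2 + t) * E := aux_key2 t ht.le
  constructor
  · rw [div_sub_div _ _ ht.ne' hden.ne', le_div_iff₀ (by positivity)]
    nlinarith
  · rw [div_sub_div _ _ ht.ne' hden.ne', div_le_iff₀ (by positivity)]
    nlinarith
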